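/- One has ∑_{(x₁,x₂) ∈ ℕ²} Cat_{x₁} · Cat_{x₂} · Cat_{x₁+x₂} · (1/4)^{2(x₁+x₂)} = 8 − 64/(3π). -/

import Mathlib

open Real Finset

noncomputable section
namespace Stmt7Aux

/-- the diagonal sums -/
def g (n : ℕ) : ℝ := (catalan n : ℝ) * (catalan (n + 1) : ℝ) * (1 / 16 : ℝ) ^ n

/-- the tail term -/
def T (n : ℕ) : ℝ :=
  8 / 3 * (2 * n + 1) * (4 * n + 3) / (n + 1) * ((Nat.centralBinom n : ℝ) / 4 ^ n) ^ 2

lemma catalan_real (n : ℕ) :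
    (catalan n : ℝ) = (Nat.centralBinom n : ℝ) / (n + 1) := by
  rw [eq_div_iff (by positivity)]
  rw [mul_comm]
  exact_mod_cast congrArg (Nat.cast : ℕ → ℝ) (succ_mul_catalan_eq_centralBinom n)

lemma centralBinom_succ_real (n : ℕ) :
    (Nat.centralBinom (n + 1) : ℝ) = 2 * (2 * n + 1) * (Nat.centralBinom n : ℝ) / (n + 1) := by
  rw [eq_div_iff (by positivity), mul_comm _ ((n : ℝ) + 1)]
  exact_mod_cast congrArg (Nat.cast : ℕ → ℝ) (Nat.succ_mul_centralBinom_succ n)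

lemma partial_sum (N : ℕ) : ∑ n ∈ range N, g n = 8 - T N := by
  induction N with
  | zero => simp [T]
  | succ N ih =>
    rw [Finset.sum_range_succ, ih]
    have key : g N = T N - T (N + 1) := by
      unfold g T
      rw [catalan_real, catalan_real, centralBinom_succ_real]
      have h1 : ((N : ℝ) + 1) ≠ 0 := by positivity
      have h2 : ((N : ℝ) + 1 + 1) ≠ 0 := by positivity
      have h3 : ((4 : ℝ)) ^ N ≠ 0 := by positivity
      have h16 : ((16 : ℝ)) ^ N ≠ 0 := by positivity
      have hp : (1 / 16 : ℝ) ^ N = ((16 : ℝ) ^ N)⁻¹ := by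
        rw [one_div, inv_pow]
      have hq : ((4 : ℝ) ^ N) ^ 2 = 16 ^ N := by
        rw [← pow_mul, mul_comm, pow_mul]; norm_num
      push_cast
      rw [hp]
      field_simp
      rw [pow_succ, ← hq]
      ring
    rw [key]; ring

lemma T_eq (n : ℕ) :
    T n = 8 / 3 * ((4 * n + 3) / (n + 1)) * (Real.Wallis.W n)⁻¹ := by
  have hW : Real.Wallis.W n =
      2 ^ (4 * n) * (n.factorial : ℝ) ^ 4 / ((2 * n).factorial ^ 2 * (2 * n + 1)) :=
    Real.Wallis.W_eq_factorial_ratio n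
  have hc : (Nat.centralBinom n : ℝ) * (n.factorial * n.factorial) = (2 * n).factorial := by
    have := Nat.choose_mul_factorial_mul_factorial (Nat.le_mul_of_pos_left n (by norm_num) : n ≤ 2 * n)
    have h2 : 2 * n - n = n := by omega
    rw [h2] at this
    rw [Nat.centralBinom]
    exact_mod_cast congrArg (Nat.cast : ℕ → ℝ) (by rw [← this]; ring)
  have hinv : (2 * (n : ℝ) + 1) * ((Nat.centralBinom n : ℝ) / 4 ^ n) ^ 2 = (Real.Wallis.W n)⁻¹ := by
    rw [hW]
    have hf : (n.factorial : ℝ) ≠ 0 := by positivity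
    have h4 : ((4 : ℝ)) ^ n ≠ 0 := by positivity
    have h2n1 : (2 * (n : ℝ) + 1) ≠ 0 := by positivity
    have h2f : ((2 * n).factorial : ℝ) ≠ 0 := by positivity
    have h2p : ((2 : ℝ)) ^ (4 * n) = ((4 : ℝ) ^ n) ^ 2 := by
      rw [show (4 : ℝ) = 2 ^ 2 by norm_num, ← pow_mul, ← pow_mul]
      congr 1
      omega
    rw [← hc, h2p]
    field_simp
  rw [T, ← hinv]
  ring

lemma T_tendsto : Filter.Tendsto T Filter.atTop (nhds (64 / (3 * π))) := by
  have hWinv : Filter.Tendsto (fun n => (Real.Wallis.W n)⁻¹) Filter.atTop (nhds (π / 2)⁻¹) :=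
    Real.Wallis.tendsto_W_nhds_pi_div_two.inv₀ (by positivity)
  have hfrac : Filter.Tendsto (fun n : ℕ => (4 * (n : ℝ) + 3) / (n + 1)) Filter.atTop (nhds 4) := by
    have h1 : Filter.Tendsto (fun n : ℕ => (1 : ℝ) / (n + 1)) Filter.atTop (nhds 0) :=
      tendsto_one_div_add_atTop_nhds_zero_nat
    have : Filter.Tendsto (fun n : ℕ => 4 - (1 : ℝ) / (n + 1)) Filter.atTop (nhds (4 - 0)) :=
      (tendsto_const_nhds).sub h1
    rw [sub_zero] at this
    refine this.congr fun n => ?_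
    have : ((n : ℝ) + 1) ≠ 0 := by positivity
    field_simp
    ring
  have := ((hfrac.const_mul (8 / 3 : ℝ)).mul hWinv)
  have heq : (8 / 3 : ℝ) * 4 * (π / 2)⁻¹ = 64 / (3 * π) := by
    rw [inv_div]
    field_simp
    ring
  rw [heq] at this
  exact this.congr fun n => by rw [T_eq]

lemma g_nonneg (n : ℕ) : 0 ≤ g n := by unfold g; positivity

lemma T_nonneg (n : ℕ) : 0 ≤ T n := by unfold T; positivity

lemma partial_le (N : ℕ) : ∑ n ∈ range N, g n ≤ 8 := by
  rw [partial_sum]; linarith [T_nonneg N]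

/-- the summand on pairs -/
def f (p : ℕ × ℕ) : ℝ :=
  (catalan p.1 : ℝ) * (catalan p.2 : ℝ) * (catalan (p.1 + p.2) : ℝ) *
    (1 / 4 : ℝ) ^ (2 * (p.1 + p.2))

lemma f_nonneg (p : ℕ × ℕ) : 0 ≤ f p := by unfold f; positivity

lemma antidiagonal_sum (n : ℕ) : ∑ p ∈ Finset.HasAntidiagonal.antidiagonal n, f p = g n := by
  have h1 : ∀ p ∈ Finset.HasAntidiagonal.antidiagonal n,
      f p = (catalan p.1 : ℝ) * (catalan p.2 : ℝ) * ((catalan n : ℝ) * (1 / 16 : ℝ) ^ n) := by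
    intro p hp
    rw [Finset.HasAntidiagonal.mem_antidiagonal] at hp
    unfold f
    rw [hp, pow_mul]
    have h14 : ((1 : ℝ) / 4) ^ 2 = 1 / 16 := by norm_num
    rw [h14]
    ring
  rw [Finset.sum_congr rfl h1, ← Finset.sum_mul]
  have h2 : ∑ p ∈ Finset.HasAntidiagonal.antidiagonal n, (catalan p.1 : ℝ) * (catalan p.2 : ℝ)
      = (catalan (n + 1) : ℝ) := by
    rw [catalan_succ']
    push_cast
    rfl
  rw [h2, g]
  ring

lemma f_summable : Summable f := by
  apply summable_of_sum_le f_nonneg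
  intro u
  set N := u.sup (fun p => p.1 + p.2) with hN
  have hsub : u ⊆ (range (N + 1)).biUnion Finset.HasAntidiagonal.antidiagonal := by
    intro p hp
    rw [Finset.mem_biUnion]
    exact ⟨p.1 + p.2, Finset.mem_range_succ_iff.mpr (Finset.le_sup (f := fun p : ℕ × ℕ => p.1 + p.2) hp),
      Finset.HasAntidiagonal.mem_antidiagonal.mpr rfl⟩
  calc ∑ p ∈ u, f p ≤ ∑ p ∈ (range (N + 1)).biUnion Finset.HasAntidiagonal.antidiagonal, f p :=
        Finset.sum_le_sum_of_subset_of_nonneg hsub (fun p _ _ => f_nonneg p)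
    _ = ∑ n ∈ range (N + 1), ∑ p ∈ Finset.HasAntidiagonal.antidiagonal n, f p := by
        apply Finset.sum_biUnion
        intro a _ b _ hab
        simp only [Function.onFun]
        rw [Finset.disjoint_left]
        intro p hpa hpb
        rw [Finset.HasAntidiagonal.mem_antidiagonal] at hpa hpb
        exact hab (hpa ▸ hpb)
    _ = ∑ n ∈ range (N + 1), g n := by
        exact Finset.sum_congr rfl fun n _ => antidiagonal_sum n
    _ ≤ 8 := partial_le (N + 1)

lemma g_hasSum : HasSum g (8 - 64 / (3 * π)) := by
  have hs : Summable g := summable_of_sum_range_le g_nonneg partial_le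
  have h1 : Filter.Tendsto (fun N => ∑ n ∈ range N, g n) Filter.atTop
      (nhds (8 - 64 / (3 * π))) := by
    have : Filter.Tendsto (fun N => 8 - T N) Filter.atTop (nhds (8 - 64 / (3 * π))) :=
      (tendsto_const_nhds).sub T_tendsto
    exact this.congr fun N => (partial_sum N).symm
  have h2 := hs.hasSum.tendsto_sum_nat
  have h3 := tendsto_nhds_unique h2 h1
  exact h3 ▸ hs.hasSum

end Stmt7Aux
end

set_option maxHeartbeats 1000000 in
open Stmt7Aux in
/-- `∑_{x₁,x₂} Cat_{x₁} Cat_{x₂} Cat_{x₁+x₂} (1/4)^{2(x₁+x₂)} = 8 − 64/(3π)`. -/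
theorem stmt_7 :
    ∑' x : ℕ × ℕ,
      (catalan x.1 : ℝ) * (catalan x.2 : ℝ) * (catalan (x.1 + x.2) : ℝ) *
        (1 / 4 : ℝ) ^ (2 * (x.1 + x.2)) = 8 - 64 / (3 * π) := by
  have hf : Summable f := f_summable
  have key : ∑' x : ℕ × ℕ, f x = 8 - 64 / (3 * π) := by
    rw [← Finset.HasAntidiagonal.sigmaAntidiagonalEquivProd.tsum_eq f]
    have hs : Summable (fun σ : Σ n : ℕ, Finset.HasAntidiagonal.antidiagonal n =>
        f (Finset.HasAntidiagonal.sigmaAntidiagonalEquivProd σ)) :=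
      (Equiv.summable_iff _).mpr hf
    rw [Summable.tsum_sigma hs]
    have h4 : ∀ n : ℕ, (∑' p : Finset.HasAntidiagonal.antidiagonal n,
        f (Finset.HasAntidiagonal.sigmaAntidiagonalEquivProd ⟨n, p⟩)) = g n := by
      intro n
      have : (∑' p : Finset.HasAntidiagonal.antidiagonal n,
          f (Finset.HasAntidiagonal.sigmaAntidiagonalEquivProd ⟨n, p⟩)) = ∑' p : Finset.HasAntidiagonal.antidiagonal n, f p :=
        tsum_congr fun p => rfl
      rw [this, Finset.tsum_subtype, antidiagonal_sum]
    rw [tsum_congr h4]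
    exact g_hasSum.tsum_eq
  exact key
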